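/- With A(ρ,m) as above, the derivative in m satisfies m ∂_m A(ρ,m) ≥ 3 A(ρ,m) for all ρ > 0 and m ∈ ℝ. -/

import Mathlib

set_option maxHeartbeats 1000000
open MeasureTheory Set Filter

lemma my_hasDerivAt_abs_rpow_mul {q : ℝ} (hq : 1 < q) (x : ℝ) :
    HasDerivAt (fun t : ℝ => |t| ^ q * t) ((q + 1) * |x| ^ q) x := by
  rcases eq_or_ne x 0 with rfl | hx
  · rw [hasDerivAt_iff_tendsto_slope]
    have h0 : |(0:ℝ)| ^ q = 0 := by
      simp [Real.zero_rpow (by linarith : q ≠ 0)]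
    rw [h0, mul_zero]
    have hcont : Tendsto (fun t : ℝ => |t| ^ q) (nhdsWithin 0 {(0:ℝ)}ᶜ) (nhds 0) := by
      have hc : Continuous (fun t : ℝ => |t| ^ q) :=
        continuous_abs.rpow_const (fun t => Or.inr (by linarith))
      have := (hc.tendsto 0).mono_left (nhdsWithin_le_nhds (s := {(0:ℝ)}ᶜ))
      simpa only [h0] using this
    apply squeeze_zero_norm' _ hcont
    filter_upwards [self_mem_nhdsWithin] with t ht
    have ht' : (t:ℝ) ≠ 0 := ht
    rw [slope_def_field]
    simp only [mul_zero, abs_zero, h0, zero_mul, sub_zero]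
    rw [mul_div_assoc, div_self ht', mul_one]
    simp [Real.norm_eq_abs, abs_of_nonneg (Real.rpow_nonneg (abs_nonneg t) q)]
  · have h1 := (hasDerivAt_abs_rpow x hq).mul (hasDerivAt_id x)
    convert h1 using 1
    all_goals try rfl
    have hx' : (0:ℝ) < |x| := abs_pos.mpr hx
    have hsq : x * x = |x| ^ (2:ℝ) := by
      rw [show |x| ^ (2:ℝ) = |x| ^ (2:ℕ) from Real.rpow_natCast _ 2]
      rw [pow_two, abs_mul_abs_self]
    have key : |x| ^ (q - 2) * (x * x) = |x| ^ q := by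
      rw [hsq, ← Real.rpow_add hx']; norm_num
    rw [id_eq]
    linear_combination (-q) * key

noncomputable def G0 (p x : ℝ) : ℝ := |x| ^ p
noncomputable def G1 (p x : ℝ) : ℝ := p * (|x| ^ (p - 2) * x)
noncomputable def G2 (p x : ℝ) : ℝ := p * (p - 1) * |x| ^ (p - 2)
noncomputable def G3 (p x : ℝ) : ℝ := p * (p - 1) * (p - 2) * (|x| ^ (p - 2 - 2) * x)

lemma hasDerivAt_G0 {p : ℝ} (hp : 3 < p) (x : ℝ) : HasDerivAt (G0 p) (G1 p x) x := by
  have := hasDerivAt_abs_rpow x (p := p) (by linarith)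
  unfold G0; simpa [G1, mul_assoc] using this

lemma hasDerivAt_G1 {p : ℝ} (hp : 3 < p) (x : ℝ) : HasDerivAt (G1 p) (G2 p x) x := by
  have := (my_hasDerivAt_abs_rpow_mul (q := p - 2) (by linarith) x).const_mul p
  have h2 : p * ((p - 2 + 1) * |x| ^ (p - 2)) = G2 p x := by unfold G2; ring
  rw [h2] at this
  exact this

lemma hasDerivAt_G2 {p : ℝ} (hp : 3 < p) (x : ℝ) : HasDerivAt (G2 p) (G3 p x) x := by
  have := (hasDerivAt_abs_rpow x (p := p - 2) (by linarith)).const_mul (p * (p - 1))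
  convert this using 1
  all_goals try rfl
  unfold G3; ring

lemma monotone_aux {p : ℝ} (hp : 3 < p) : Monotone (fun x : ℝ => |x| ^ (p - 2 - 2) * x) := by
  intro a b hab
  dsimp only
  have key : ∀ c : ℝ, 0 ≤ c → |c| ^ (p - 2 - 2) * c = c ^ (p - 3) := by
    intro c hc0
    rcases eq_or_lt_of_le hc0 with rfl | hc0
    · simp [Real.zero_rpow (show p - (3:ℝ) ≠ 0 by intro h; linarith [h])]
    · rw [abs_of_pos hc0, ← Real.rpow_add_one (ne_of_gt hc0)]
      congr 1; ring
  rcases le_total 0 a with ha | ha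
  · have hb : 0 ≤ b := le_trans ha hab
    rw [key a ha, key b hb]
    exact Real.rpow_le_rpow ha hab (by linarith)
  · rcases le_total 0 b with hb | hb
    · have h1 : |a| ^ (p - 2 - 2) * a ≤ 0 :=
        mul_nonpos_of_nonneg_of_nonpos (Real.rpow_nonneg (abs_nonneg a) _) ha
      have h2 : 0 ≤ |b| ^ (p - 2 - 2) * b :=
        mul_nonneg (Real.rpow_nonneg (abs_nonneg b) _) hb
      linarith
    · have hma := key (-a) (by linarith)
      have hmb := key (-b) (by linarith)
      rw [abs_neg] at hma hmb
      have : (-b) ^ (p - 3) ≤ (-a) ^ (p - 3) :=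
        Real.rpow_le_rpow (by linarith) (by linarith) (by linarith)
      nlinarith [hma, hmb]

lemma monotone_G3_le {p : ℝ} (hp : 3 < p) {a b : ℝ} (hab : a ≤ b) : G3 p a ≤ G3 p b := by
  have hc : (0:ℝ) ≤ p * (p - 1) * (p - 2) := by
    have h1 : (0:ℝ) < p := by linarith
    have h2 : (0:ℝ) < p - 1 := by linarith
    have h3 : (0:ℝ) < p - 2 := by linarith
    positivity
  have := monotone_aux hp hab
  unfold G3
  exact mul_le_mul_of_nonneg_left this hc

lemma tangent_G2 {p : ℝ} (hp : 3 < p) (x y : ℝ) :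
    G2 p y + G3 p y * (x - y) ≤ G2 p x := by
  rcases lt_trichotomy x y with h | rfl | h
  · obtain ⟨c, hc, hceq⟩ := exists_hasDerivAt_eq_slope (G2 p) (G3 p) h
      (fun t _ => (hasDerivAt_G2 hp t).continuousAt.continuousWithinAt)
      (fun t _ => hasDerivAt_G2 hp t)
    have hmono : G3 p c ≤ G3 p y := monotone_G3_le hp (le_of_lt hc.2)
    rw [eq_div_iff (sub_ne_zero.mpr (ne_of_gt h))] at hceq
    nlinarith [hceq, hmono, sub_pos.mpr h]
  · simp
  · obtain ⟨c, hc, hceq⟩ := exists_hasDerivAt_eq_slope (G2 p) (G3 p) h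
      (fun t _ => (hasDerivAt_G2 hp t).continuousAt.continuousWithinAt)
      (fun t _ => hasDerivAt_G2 hp t)
    have hmono : G3 p y ≤ G3 p c := monotone_G3_le hp (le_of_lt hc.1)
    rw [eq_div_iff (sub_ne_zero.mpr (ne_of_gt h))] at hceq
    nlinarith [hceq, hmono, sub_pos.mpr h]

lemma key_pointwise {p : ℝ} (hp : 3 < p) (x u : ℝ) :
    3 * (G0 p (u + x) - G0 p x - G1 p x * u - (1/2) * G2 p x * u^2)
      ≤ u * (G1 p (u + x) - G1 p x - G2 p x * u) := by
  set φ : ℝ → ℝ := fun v => v * (G1 p (v + x) - G1 p x - G2 p x * v)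
      - 3 * (G0 p (v + x) - G0 p x - G1 p x * v - (1/2) * G2 p x * v^2) with hφdef
  set ψ : ℝ → ℝ := fun v => v * G2 p (v + x) + v * G2 p x - 2 * G1 p (v + x) + 2 * G1 p x
    with hψdef
  have hshift : ∀ v : ℝ, HasDerivAt (fun w : ℝ => w + x) 1 v :=
    fun v => (hasDerivAt_id v).add_const x
  have h0 : ∀ v : ℝ, HasDerivAt (fun w : ℝ => G0 p (w + x)) (G1 p (v + x)) v := by
    intro v
    simpa [Function.comp_def] using (hasDerivAt_G0 hp (v + x)).comp v (hshift v)
  have h1 : ∀ v : ℝ, HasDerivAt (fun w : ℝ => G1 p (w + x)) (G2 p (v + x)) v := by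
    intro v
    simpa [Function.comp_def] using (hasDerivAt_G1 hp (v + x)).comp v (hshift v)
  have h2 : ∀ v : ℝ, HasDerivAt (fun w : ℝ => G2 p (w + x)) (G3 p (v + x)) v := by
    intro v
    simpa [Function.comp_def] using (hasDerivAt_G2 hp (v + x)).comp v (hshift v)
  have hφ : ∀ v : ℝ, HasDerivAt φ (ψ v) v := by
    intro v
    have hA : HasDerivAt (fun w : ℝ => G1 p (w + x) - G1 p x - G2 p x * w)
        (G2 p (v + x) - G2 p x) v := by
      have := ((h1 v).sub_const (G1 p x)).sub ((hasDerivAt_id v).const_mul (G2 p x))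
      simpa [Pi.sub_def] using this
    have hB : HasDerivAt (fun w : ℝ =>
        G0 p (w + x) - G0 p x - G1 p x * w - (1/2) * G2 p x * w^2)
        (G1 p (v + x) - G1 p x - G2 p x * v) v := by
      have hsq : HasDerivAt (fun w : ℝ => (1/2) * G2 p x * w^2) (G2 p x * v) v := by
        have := (hasDerivAt_pow 2 v).const_mul ((1/2) * G2 p x)
        convert this using 1
        all_goals try rfl
        push_cast; ring
      have := (((h0 v).sub_const (G0 p x)).sub
        ((hasDerivAt_id v).const_mul (G1 p x))).sub hsq
      simpa [Pi.sub_def] using this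
    have := ((hasDerivAt_id v).mul hA).sub (hB.const_mul 3)
    convert this using 1
    all_goals try rfl
    simp only [id_eq, hψdef]
    ring
  have hψ : ∀ v : ℝ, HasDerivAt ψ
      (v * G3 p (v + x) - G2 p (v + x) + G2 p x) v := by
    intro v
    have ht1 : HasDerivAt (fun w : ℝ => w * G2 p (w + x))
        (G2 p (v + x) + v * G3 p (v + x)) v := by
      have := (hasDerivAt_id v).mul (h2 v)
      simpa [Pi.mul_def] using this
    have ht2 : HasDerivAt (fun w : ℝ => w * G2 p x) (G2 p x) v := by
      simpa using (hasDerivAt_id v).mul_const (G2 p x)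
    have ht3 : HasDerivAt (fun w : ℝ => 2 * G1 p (w + x)) (2 * G2 p (v + x)) v :=
      (h1 v).const_mul 2
    have := (((ht1.add ht2).sub ht3).add_const (2 * G1 p x))
    convert this using 1
    all_goals try rfl
    ring
  have hχ : ∀ v : ℝ, 0 ≤ v * G3 p (v + x) - G2 p (v + x) + G2 p x := by
    intro v
    have := tangent_G2 hp x (v + x)
    nlinarith [this]
  have hψ0 : ψ 0 = 0 := by simp [hψdef]
  have hψsign : ∀ v : ℝ, 0 ≤ v → 0 ≤ ψ v := by
    intro v hv
    rcases eq_or_lt_of_le hv with rfl | hv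
    · rw [hψ0]
    · obtain ⟨c, _, hceq⟩ := exists_hasDerivAt_eq_slope ψ _ hv
        (fun t _ => (hψ t).continuousAt.continuousWithinAt) (fun t _ => hψ t)
      rw [eq_div_iff (sub_ne_zero.mpr (ne_of_gt hv))] at hceq
      nlinarith [hχ c, hceq, hψ0]
  have hψsign' : ∀ v : ℝ, v ≤ 0 → ψ v ≤ 0 := by
    intro v hv
    rcases eq_or_lt_of_le hv with rfl | hv
    · rw [hψ0]
    · obtain ⟨c, _, hceq⟩ := exists_hasDerivAt_eq_slope ψ _ hv
        (fun t _ => (hψ t).continuousAt.continuousWithinAt) (fun t _ => hψ t)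
      rw [eq_div_iff (sub_ne_zero.mpr (ne_of_gt hv))] at hceq
      nlinarith [hχ c, hceq, hψ0]
  have hφ0 : φ 0 = 0 := by simp [hφdef]
  have hφnn : ∀ v : ℝ, 0 ≤ φ v := by
    intro v
    rcases lt_trichotomy v 0 with hv | rfl | hv
    · obtain ⟨c, hc, hceq⟩ := exists_hasDerivAt_eq_slope φ _ hv
        (fun t _ => (hφ t).continuousAt.continuousWithinAt) (fun t _ => hφ t)
      rw [eq_div_iff (sub_ne_zero.mpr (ne_of_gt hv))] at hceq
      nlinarith [hψsign' c (le_of_lt hc.2), hceq, hφ0]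
    · rw [hφ0]
    · obtain ⟨c, hc, hceq⟩ := exists_hasDerivAt_eq_slope φ _ hv
        (fun t _ => (hφ t).continuousAt.continuousWithinAt) (fun t _ => hφ t)
      rw [eq_div_iff (sub_ne_zero.mpr (ne_of_gt hv))] at hceq
      nlinarith [hψsign c (le_of_lt hc.1), hceq, hφ0]
  have := hφnn u
  rw [hφdef] at this
  nlinarith [this]

lemma continuous_G0 {p : ℝ} (hp : 3 < p) : Continuous (G0 p) :=
  continuous_abs.rpow_const (fun _ => Or.inr (by linarith))

lemma continuous_G1 {p : ℝ} (hp : 3 < p) : Continuous (G1 p) :=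
  continuous_const.mul ((continuous_abs.rpow_const (fun _ => Or.inr (by linarith))).mul continuous_id)

lemma continuous_G2 {p : ℝ} (hp : 3 < p) : Continuous (G2 p) :=
  continuous_const.mul (continuous_abs.rpow_const (fun _ => Or.inr (by linarith)))

theorem A_m_times_m_ge_three_A (γ θ l : ℝ) (hγ1 : 1 < γ) (hγ3 : γ < 3)
    (hθ : θ = (γ - 1) / 2) (hl : l = (3 - γ) / (2 * (γ - 1)))
    (g : ℝ → ℝ) (hg : ∀ ξ : ℝ, g ξ = |ξ| ^ (2 * γ / (γ - 1)))
    (Afun : ℝ → ℝ → ℝ)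
    (hA : ∀ ρ m : ℝ, Afun ρ m = ρ * ∫ z in (-1 : ℝ)..1,
      (g (m / ρ + z * ρ ^ θ) - g (z * ρ ^ θ) - deriv g (z * ρ ^ θ) * (m / ρ)
        - (1 / 2) * deriv (deriv g) (z * ρ ^ θ) * (m / ρ) ^ 2) * (1 - z ^ 2) ^ l) :
    ∀ ρ m : ℝ, 0 < ρ → 3 * Afun ρ m ≤ m * deriv (fun m' => Afun ρ m') m := by
  intro ρ m hρ
  set P : ℝ := 2 * γ / (γ - 1) with hPdef
  have hγ1' : (0:ℝ) < γ - 1 := by linarith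
  have hP : 3 < P := by
    rw [hPdef, lt_div_iff₀ hγ1']
    linarith
  have hl0 : 0 < l := by
    rw [hl]
    apply div_pos <;> linarith
  have hgG0 : g = G0 P := funext fun ξ => by rw [hg]; rfl
  have hd1 : deriv g = G1 P := by
    rw [hgG0]; exact funext fun ξ => (hasDerivAt_G0 hP ξ).deriv
  have hd2 : deriv (deriv g) = G2 P := by
    rw [hd1]; exact funext fun ξ => (hasDerivAt_G1 hP ξ).deriv
  set c : ℝ := ρ ^ θ with hcdef
  set w : ℝ → ℝ := fun z => (1 - z ^ 2) ^ l with hwdef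
  have hwcont : Continuous w :=
    (continuous_const.sub (continuous_pow 2)).rpow_const (fun _ => Or.inr hl0.le)
  set F : ℝ → ℝ → ℝ := fun m' z =>
    (G0 P (m' / ρ + z * c) - G0 P (z * c) - G1 P (z * c) * (m' / ρ)
      - (1 / 2) * G2 P (z * c) * (m' / ρ) ^ 2) * w z with hFdef
  set F' : ℝ → ℝ → ℝ := fun m' z =>
    ((G1 P (m' / ρ + z * c) - G1 P (z * c) - G2 P (z * c) * (m' / ρ)) * (1 / ρ)) * w z
    with hF'def
  have hAF : ∀ m' : ℝ, Afun ρ m' = ρ * ∫ z in Ioc (-1:ℝ) 1, F m' z := by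
    intro m'
    rw [hA, hd2, hd1, hgG0, intervalIntegral.integral_of_le (by norm_num : (-1:ℝ) ≤ 1)]
  -- continuity of F and F' jointly
  have hcF : ∀ m' : ℝ, Continuous (F m') := by
    intro m'
    apply Continuous.mul _ hwcont
    have hzc : Continuous (fun z : ℝ => z * c) := continuous_id.mul continuous_const
    exact ((((continuous_G0 hP).comp (continuous_const.add hzc)).sub
      ((continuous_G0 hP).comp hzc)).sub
      (((continuous_G1 hP).comp hzc).mul continuous_const)).sub
      ((continuous_const.mul ((continuous_G2 hP).comp hzc)).mul continuous_const)
  have hcF' : Continuous (fun q : ℝ × ℝ => F' q.1 q.2) := by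
    have hzc : Continuous (fun q : ℝ × ℝ => q.2 * c) := continuous_snd.mul continuous_const
    have hu : Continuous (fun q : ℝ × ℝ => q.1 / ρ) := continuous_fst.div_const ρ
    apply Continuous.mul _ (hwcont.comp continuous_snd)
    exact ((((continuous_G1 hP).comp (hu.add hzc)).sub
      ((continuous_G1 hP).comp hzc)).sub
      (((continuous_G2 hP).comp hzc).mul hu)).mul continuous_const
  have hcF'm : ∀ m' : ℝ, Continuous (fun z => F' m' z) := by
    intro m'
    have : (fun z => F' m' z) = (fun q : ℝ × ℝ => F' q.1 q.2) ∘ (fun z : ℝ => (m', z)) := rfl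
    rw [this]
    exact hcF'.comp (continuous_const.prodMk continuous_id)
  -- the derivative of the integral
  set μ : Measure ℝ := volume.restrict (Ioc (-1:ℝ) 1) with hμdef
  obtain ⟨C, hC⟩ : ∃ C : ℝ, ∀ q ∈ (Icc (m - 1) (m + 1) ×ˢ Icc (-1:ℝ) 1),
      ‖F' q.1 q.2‖ ≤ C :=
    ((isCompact_Icc.prod isCompact_Icc).exists_bound_of_continuousOn hcF'.continuousOn)
  have hdiff : HasDerivAt (fun n => ∫ z, F n z ∂μ) (∫ z, F' m z ∂μ) m := by
    refine (hasDerivAt_integral_of_dominated_loc_of_deriv_le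
      (F := F) (F' := F') (bound := fun _ => C) (s := Metric.ball m 1) (Metric.ball_mem_nhds m one_pos) ?_ ?_ ?_ ?_ ?_ ?_).2
    · exact Filter.Eventually.of_forall fun x => (hcF x).aestronglyMeasurable
    · exact ((hcF m).integrableOn_Ioc)
    · exact (hcF'm m).aestronglyMeasurable
    · filter_upwards [ae_restrict_mem measurableSet_Ioc] with z hz
      intro x hx
      apply hC (x, z)
      constructor
      · have hd := Metric.mem_ball.mp hx
        rw [Real.dist_eq] at hd
        have h1 := (abs_lt.mp hd).1
        have h2 := (abs_lt.mp hd).2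
        exact ⟨by linarith, by linarith⟩
      · exact ⟨le_of_lt hz.1, hz.2⟩
    · rw [hμdef]
      exact ((integrableOn_const_iff (C := C)).mpr (Or.inr (by simp [Real.volume_Ioc])))
    · filter_upwards with z
      intro x _
      have hbase : HasDerivAt (fun m' : ℝ => m' / ρ) (1 / ρ) x := by
        simpa using (hasDerivAt_id x).div_const ρ
      have h0 : HasDerivAt (fun m' : ℝ => G0 P (m' / ρ + z * c))
          (G1 P (x / ρ + z * c) * (1 / ρ)) x :=
        by simpa [Function.comp_def] using (hasDerivAt_G0 hP (x / ρ + z * c)).comp x (hbase.add_const (z * c))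
      have h1 : HasDerivAt (fun m' : ℝ => G1 P (z * c) * (m' / ρ))
          (G1 P (z * c) * (1 / ρ)) x := hbase.const_mul _
      have h2 : HasDerivAt (fun m' : ℝ => (1 / 2) * G2 P (z * c) * (m' / ρ) ^ 2)
          ((1 / 2) * G2 P (z * c) * (2 * (x / ρ) * (1 / ρ))) x := by
        have := ((hbase.pow 2).const_mul ((1 / 2) * G2 P (z * c)))
        convert this using 1
        all_goals try rfl
        push_cast; ring
      have := ((((h0.sub_const (G0 P (z * c))).sub h1).sub h2).mul_const (w z))
      convert this using 1
      all_goals try rfl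
      rw [hF'def]
      ring
  -- identify the deriv
  have hAfun_eq : (fun m' => Afun ρ m') = fun m' => ρ * ∫ z, F m' z ∂μ := funext hAF
  have hAd : HasDerivAt (fun m' => Afun ρ m') (ρ * ∫ z, F' m z ∂μ) m := by
    rw [hAfun_eq]
    exact hdiff.const_mul ρ
  rw [hAd.deriv, hAF m]
  -- final comparison
  have hmono : ∫ z, 3 * F m z ∂μ ≤ ∫ z, m * F' m z ∂μ := by
    apply integral_mono_ae
    · exact (continuous_const.mul (hcF m)).integrableOn_Ioc
    · exact (continuous_const.mul (hcF'm m)).integrableOn_Ioc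
    · filter_upwards [ae_restrict_mem measurableSet_Ioc] with z hz
      have hwnn : 0 ≤ w z := by
        apply Real.rpow_nonneg
        nlinarith [hz.1, hz.2]
      have hkey := key_pointwise hP (z * c) (m / ρ)
      have := mul_le_mul_of_nonneg_right hkey hwnn
      rw [hFdef, hF'def]
      dsimp only
      rw [div_add' _ _ _ (ne_of_gt hρ)] at this ⊢
      have heq : ∀ X : ℝ, m * (X * (1 / ρ) * w z) = m / ρ * X * w z := by
        intro X; ring
      rw [heq]
      linarith [this]
  calc 3 * (ρ * ∫ z, F m z ∂μ) = ρ * ∫ z, 3 * F m z ∂μ := by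
        rw [integral_const_mul]; ring
    _ ≤ ρ * ∫ z, m * F' m z ∂μ := by
        exact mul_le_mul_of_nonneg_left hmono (le_of_lt hρ)
    _ = m * (ρ * ∫ z, F' m z ∂μ) := by
        rw [integral_const_mul]; ring
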